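/- Suppose ρ is irreducible, V admits a G-invariant positive-definite Hermitian form h, and V admits a nonzero G-invariant symmetric bilinear form q. Then V admits a conjugate-linear G-equivariant bijection σ with σ∘σ = id_V. -/

import Mathlib

/-- If `ρ` is irreducible, `V` admits a `G`-invariant positive-definite
Hermitian form `h` and a nonzero `G`-invariant symmetric bilinear form `q`, then `V`
admits a conjugate-linear `G`-equivariant bijection `σ` with `σ ∘ σ = id`. -/
theorem real_structure_of_symmetric_form
    {G V : Type*} [Group G] [AddCommGroup V] [Module ℂ V]
    [FiniteDimensional ℂ V] [Nontrivial V]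
    (ρ : G →* (V ≃ₗ[ℂ] V))
    (hirr : ∀ p : Submodule ℂ V, (∀ g : G, ∀ x ∈ p, ρ g x ∈ p) → p = ⊥ ∨ p = ⊤)
    (h : V → V → ℂ)
    (hadd₁ : ∀ x y z : V, h (x + y) z = h x z + h y z)
    (hsmul₁ : ∀ (c : ℂ) (x y : V), h (c • x) y = c * h x y)
    (hherm : ∀ x y : V, h y x = (starRingEnd ℂ) (h x y))
    (hpos : ∀ x : V, x ≠ 0 → 0 < (h x x).re)
    (hinvh : ∀ (g : G) (x y : V), h (ρ g x) (ρ g y) = h x y)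
    (q : V →ₗ[ℂ] V →ₗ[ℂ] ℂ) (hq : q ≠ 0)
    (hinv : ∀ (g : G) (x y : V), q (ρ g x) (ρ g y) = q x y)
    (hsymm : ∀ x y : V, q x y = q y x) :
    ∃ σ : V → V,
      (∀ a b : V, σ (a + b) = σ a + σ b) ∧
      (∀ (c : ℂ) (v : V), σ (c • v) = (starRingEnd ℂ) c • σ v) ∧
      (∀ (g : G) (v : V), σ (ρ g v) = ρ g (σ v)) ∧
      Function.Bijective σ ∧
      (∀ v : V, σ (σ v) = v) := by
  classical
  -- h in the second slot
  have hsmul₂ : ∀ (c : ℂ) (x y : V), h x (c • y) = (starRingEnd ℂ) c * h x y := by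
    intro c x y
    rw [hherm (c • y) x, hsmul₁, map_mul, ← hherm y x]
  have hzero₁ : ∀ y : V, h 0 y = 0 := by
    intro y
    have := hsmul₁ 0 0 y
    simpa using this
  have hzero₂ : ∀ x : V, h x 0 = 0 := by
    intro x
    rw [hherm 0 x, hzero₁]; simp
  have hadd₂ : ∀ x y z : V, h x (y + z) = h x y + h x z := by
    intro x y z
    rw [hherm (y + z) x, hadd₁, map_add, ← hherm y x, ← hherm z x]
  have hdef : ∀ x : V, h x x = 0 → x = 0 := by
    intro x hx
    by_contra hx0
    have := hpos x hx0
    rw [hx] at this; simp at this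
  -- inner product space structure
  letI core : InnerProductSpace.Core ℂ V :=
    { inner := fun x y => h y x
      conj_inner_symm := fun x y => (hherm x y).symm
      re_inner_nonneg := fun x => by
        by_cases hx : x = 0
        · subst hx; simp [hzero₁]
        · exact le_of_lt (hpos x hx)
      add_left := fun x y z => hadd₂ z x y
      smul_left := fun x y r => hsmul₂ r y x
      definite := fun x hx => hdef x hx }
  letI : NormedAddCommGroup V := core.toNormedAddCommGroup
  letI : InnerProductSpace ℂ V := InnerProductSpace.ofCore core.toCore
  have hinner : ∀ x y : V, (inner ℂ x y : ℂ) = h y x := fun _ _ => rfl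
  -- definition of σ₀
  set σ₀ : V → V := fun x =>
    (InnerProductSpace.toDual ℂ V).symm (LinearMap.toContinuousLinearMap (q.flip x)) with hσ₀def
  have hrep : ∀ x y : V, h y (σ₀ x) = q y x := by
    intro x y
    have := InnerProductSpace.toDual_symm_apply (𝕜 := ℂ) (E := V)
      (x := y) (y := LinearMap.toContinuousLinearMap (q.flip x))
    rw [hinner] at this
    simpa using this
  -- nondegeneracy
  have hnd : ∀ a b : V, (∀ y : V, h y a = h y b) → a = b := by
    intro a b hab
    have hsub₂ : ∀ x y z : V, h x (y - z) = h x y - h x z := by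
      intro x y z
      rw [sub_eq_add_neg, hadd₂]
      have : h x (-z) = -h x z := by
        have := hsmul₂ (-1) x z
        simpa using this
      rw [this]; ring
    have hsub : h (a - b) (a - b) = 0 := by
      rw [hsub₂, hab (a - b), sub_self]
    have := hdef _ hsub
    exact sub_eq_zero.mp this
  -- σ₀ is additive
  have hσadd : ∀ a b : V, σ₀ (a + b) = σ₀ a + σ₀ b := by
    intro a b
    apply hnd
    intro y
    rw [hrep, hadd₂, hrep, hrep]
    simp [map_add]
  have hσzero : σ₀ 0 = 0 := by
    have := hσadd 0 0
    simpa using this.symm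
  -- σ₀ is conjugate-linear
  have hσsmul : ∀ (c : ℂ) (x : V), σ₀ (c • x) = (starRingEnd ℂ) c • σ₀ x := by
    intro c x
    apply hnd
    intro y
    rw [hrep, hsmul₂]
    simp only [map_smul, smul_eq_mul]
    rw [hrep]
    simp [mul_comm]
  -- ρ facts
  have hρinv : ∀ (g : G) (y : V), ρ g (ρ g⁻¹ y) = y := by
    intro g y
    have : ρ g * ρ g⁻¹ = 1 := by rw [← map_mul]; simp
    calc ρ g (ρ g⁻¹ y) = (ρ g * ρ g⁻¹) y := rfl
      _ = y := by rw [this]; rfl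
  -- σ₀ is G-equivariant
  have hσequiv : ∀ (g : G) (x : V), σ₀ (ρ g x) = ρ g (σ₀ x) := by
    intro g x
    apply hnd
    intro y
    rw [hrep]
    calc q y (ρ g x) = q (ρ g (ρ g⁻¹ y)) (ρ g x) := by rw [hρinv]
      _ = q (ρ g⁻¹ y) x := hinv g _ _
      _ = h (ρ g⁻¹ y) (σ₀ x) := (hrep x _).symm
      _ = h (ρ g (ρ g⁻¹ y)) (ρ g (σ₀ x)) := (hinvh g _ _).symm
      _ = h y (ρ g (σ₀ x)) := by rw [hρinv]
  -- T = σ₀ ∘ σ₀ is linear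
  let T : Module.End ℂ V :=
    { toFun := fun x => σ₀ (σ₀ x)
      map_add' := by
        intro a b
        show σ₀ (σ₀ (a + b)) = σ₀ (σ₀ a) + σ₀ (σ₀ b)
        rw [hσadd, hσadd]
      map_smul' := by
        intro c x
        show σ₀ (σ₀ (c • x)) = c • σ₀ (σ₀ x)
        rw [hσsmul, hσsmul]
        simp }
  -- Schur: T = μ • id
  obtain ⟨μ, hμ⟩ := Module.End.exists_eigenvalue T
  have hTμ : ∀ x : V, σ₀ (σ₀ x) = μ • x := by
    have hinvt : ∀ g : G, ∀ x ∈ Module.End.eigenspace T μ, ρ g x ∈ Module.End.eigenspace T μ := by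
      intro g x hx
      rw [Module.End.mem_eigenspace_iff] at hx ⊢
      have hx' : σ₀ (σ₀ x) = μ • x := hx
      show σ₀ (σ₀ (ρ g x)) = μ • ρ g x
      rw [hσequiv, hσequiv, hx', map_smul]
    rcases hirr _ hinvt with hbot | htop
    · exact absurd hbot hμ
    · intro x
      have hx : x ∈ Module.End.eigenspace T μ := htop ▸ Submodule.mem_top
      exact Module.End.mem_eigenspace_iff.mp hx
  -- find x₀ with σ₀ x₀ ≠ 0
  obtain ⟨u, v, huv⟩ : ∃ u v : V, q u v ≠ 0 := by
    by_contra hc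
    push_neg at hc
    exact hq (by ext u v; simp [hc])
  have hσv : σ₀ v ≠ 0 := by
    intro h0
    rw [← hrep v u, h0, hzero₂] at huv
    exact huv rfl
  have hv : v ≠ 0 := by
    intro h0
    rw [h0, hσzero] at hσv
    exact hσv rfl
  -- compute μ
  have key : h (σ₀ v) (σ₀ v) = (starRingEnd ℂ) μ * h v v := by
    calc h (σ₀ v) (σ₀ v) = q (σ₀ v) v := hrep v (σ₀ v)
      _ = q v (σ₀ v) := hsymm _ _
      _ = h v (σ₀ (σ₀ v)) := (hrep (σ₀ v) v).symm
      _ = h v (μ • v) := by rw [hTμ]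
      _ = (starRingEnd ℂ) μ * h v v := hsmul₂ μ v v
  have him : ∀ x : V, (h x x).im = 0 := by
    intro x
    have := congrArg Complex.im (hherm x x)
    simp [Complex.conj_im] at this
    linarith
  have ha := hpos _ hσv
  have hb := hpos _ hv
  have haim := him (σ₀ v)
  have hbim := him v
  have hkre := congrArg Complex.re key
  have hkim := congrArg Complex.im key
  simp [Complex.mul_re, Complex.mul_im, Complex.conj_re, Complex.conj_im, hbim] at hkre hkim
  have hμim : μ.im = 0 := by
    rw [haim] at hkim
    have h1 : μ.im * (h v v).re = 0 := by linarith
    rcases mul_eq_zero.mp h1 with h2 | h2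
    · exact h2
    · exact absurd h2 (ne_of_gt hb)
  have hμre : 0 < μ.re := by
    by_contra hc
    push_neg at hc
    nlinarith
  -- rescale
  set t : ℝ := Real.sqrt μ.re with htdef
  have ht : 0 < t := Real.sqrt_pos.mpr hμre
  have htt : ((t * t : ℝ) : ℂ) = μ := by
    apply Complex.ext
    · simp [htdef, Real.mul_self_sqrt (le_of_lt hμre)]
    · simp [hμim]
  have htne : (t : ℂ) ≠ 0 := by
    simp [Complex.ofReal_ne_zero]
    exact ne_of_gt ht
  have hμ1 : ((t : ℂ))⁻¹ * ((t : ℂ))⁻¹ * μ = 1 := by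
    rw [← htt]
    push_cast
    field_simp
  have hconj : (starRingEnd ℂ) ((t : ℂ))⁻¹ = ((t : ℂ))⁻¹ := by
    rw [map_inv₀, Complex.conj_ofReal]
  refine ⟨fun x => ((t : ℂ))⁻¹ • σ₀ x, ?_, ?_, ?_, ?_, ?_⟩
  · intro a b
    show ((t : ℂ))⁻¹ • σ₀ (a + b) = ((t : ℂ))⁻¹ • σ₀ a + ((t : ℂ))⁻¹ • σ₀ b
    rw [hσadd, smul_add]
  · intro c x
    show ((t : ℂ))⁻¹ • σ₀ (c • x) = (starRingEnd ℂ) c • ((t : ℂ))⁻¹ • σ₀ x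
    rw [hσsmul, smul_comm]
  · intro g x
    show ((t : ℂ))⁻¹ • σ₀ (ρ g x) = ρ g (((t : ℂ))⁻¹ • σ₀ x)
    rw [hσequiv, map_smul]
  · -- bijectivity: prove involution first, reuse below
    have hinvol : Function.Involutive (fun x : V => ((t : ℂ))⁻¹ • σ₀ x) := by
      intro x
      show ((t : ℂ))⁻¹ • σ₀ (((t : ℂ))⁻¹ • σ₀ x) = x
      rw [hσsmul, hTμ, smul_smul, smul_smul, hconj, hμ1, one_smul]
    exact hinvol.bijective
  · intro x
    show ((t : ℂ))⁻¹ • σ₀ (((t : ℂ))⁻¹ • σ₀ x) = x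
    rw [hσsmul, hTμ, smul_smul, smul_smul, hconj, hμ1, one_smul]
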